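/- (Jensen inequality for sub-linear expectations) Let f be a convex function on ℝ and X a random variable with Ê[X] and Ê[f(X)] finite, where Ê is a sub-linear expectation. Then Ê[f(X)] ≥ f(Ê[X]). -/
import Mathlib

/-- A (real-valued) sub-linear expectation on the space of all random variables `Ω → ℝ`. -/
structure SubLinearExpectation (Ω : Type*) where
  E : (Ω → ℝ) → ℝ
  mono : ∀ ⦃X Y : Ω → ℝ⦄, (∀ ω, X ω ≤ Y ω) → E X ≤ E Y
  constPres : ∀ c : ℝ, E (fun _ => c) = c
  subadd : ∀ X Y : Ω → ℝ, E (fun ω => X ω + Y ω) ≤ E X + E Y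
  posHomog : ∀ l : ℝ, 0 ≤ l → ∀ X : Ω → ℝ, E (fun ω => l * X ω) = l * E X

/-- Supporting line for a convex function on ℝ. -/
lemma convex_support_line (f : ℝ → ℝ) (hf : ConvexOn ℝ Set.univ f) (a : ℝ) :
    ∃ c : ℝ, ∀ x : ℝ, f a + c * (x - a) ≤ f x := by
  set S : Set ℝ := (fun x => (f a - f x) / (a - x)) '' Set.Iio a with hS
  have hne : S.Nonempty := ⟨(f a - f (a - 1)) / (a - (a - 1)), ⟨a - 1, by norm_num, rfl⟩⟩
  have hub : ∀ z > a, ∀ s ∈ S, s ≤ (f z - f a) / (z - a) := by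
    rintro z hz s ⟨y, hy, rfl⟩
    exact hf.slope_mono_adjacent (Set.mem_univ y) (Set.mem_univ z) hy hz
  have hbdd : BddAbove S := ⟨(f (a + 1) - f a) / (a + 1 - a), fun s hs =>
    hub (a + 1) (by linarith) s hs⟩
  refine ⟨sSup S, fun x => ?_⟩
  rcases lt_trichotomy x a with h | h | h
  · have hmem : (f a - f x) / (a - x) ∈ S := ⟨x, h, rfl⟩
    have := le_csSup hbdd hmem
    have hax : 0 < a - x := by linarith
    rw [div_le_iff₀ hax] at this
    nlinarith
  · simp [h]
  · have hle : sSup S ≤ (f x - f a) / (x - a) := csSup_le hne (hub x h)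
    have hax : 0 < x - a := by linarith
    rw [le_div_iff₀ hax] at hle
    nlinarith

theorem jensen_sublinear {Ω : Type*} (sl : SubLinearExpectation Ω)
    (f : ℝ → ℝ) (hf : ConvexOn ℝ Set.univ f) (X : Ω → ℝ) :
    sl.E (fun ω => f (X ω)) ≥ f (sl.E X) := by
  set a := sl.E X with ha
  obtain ⟨c, hc⟩ := convex_support_line f hf a
  -- E[f(X)] ≥ E[f a + c*(X - a)]
  have h1 : sl.E (fun ω => f a + c * (X ω - a)) ≤ sl.E (fun ω => f (X ω)) :=
    sl.mono fun ω => hc (X ω)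
  -- lower bound for the affine part
  -- E[Y + const] ≥ E Y + const
  have hshift : ∀ (Y : Ω → ℝ) (d : ℝ), sl.E Y + d ≤ sl.E (fun ω => Y ω + d) := by
    intro Y d
    have := sl.subadd (fun ω => Y ω + d) (fun _ => -d)
    simp only [sl.constPres] at this
    have h2 : sl.E (fun ω => (Y ω + d) + -d) = sl.E Y := by
      congr 1; funext ω; ring
    linarith [h2 ▸ this]
  -- E[cX] ≥ c * E X
  have hcX : c * a ≤ sl.E (fun ω => c * X ω) := by
    rcases le_or_gt 0 c with hcpos | hcneg
    · rw [sl.posHomog c hcpos]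
    · have h0 : sl.E (fun _ => (0 : ℝ)) = 0 := sl.constPres 0
      have hsum := sl.subadd (fun ω => c * X ω) (fun ω => (-c) * X ω)
      have hzero : sl.E (fun ω => c * X ω + (-c) * X ω) = 0 := by
        have : (fun ω => c * X ω + (-c) * X ω) = fun _ => (0 : ℝ) := by
          funext ω; ring
        rw [this, h0]
      rw [hzero, sl.posHomog (-c) (by linarith)] at hsum
      linarith
  -- combine
  have key : sl.E (fun ω => c * X ω) + (f a - c * a) ≤
      sl.E (fun ω => f a + c * (X ω - a)) := by
    have := hshift (fun ω => c * X ω) (f a - c * a)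
    have heq : (fun ω => c * X ω + (f a - c * a)) = fun ω => f a + c * (X ω - a) := by
      funext ω; ring
    rwa [heq] at this
  have : f a ≤ sl.E (fun ω => f a + c * (X ω - a)) := by linarith
  linarith
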